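/- Let c > 0, κ > 0, 𝓘_c(r) := √(r² + c²), and F(r) := exp(κ · 𝓘_c(r)). Then for all r, h ∈ ℝ one has |F(r + h) − F(r) − F'(r)·h| ≤ F(r) · F(|h|) · (κ² + κ/c) · h². -/

import Mathlib

/-- The smooth approximation `𝓘_c(r) = √(r² + c²)` of the absolute value. -/
noncomputable def Ic (c r : ℝ) : ℝ := Real.sqrt (r ^ 2 + c ^ 2)

/-- second-order Taylor estimate for `F = exp(κ 𝓘_c)` with `c, κ > 0`:
`|F(r+h) − F(r) − F'(r)h| ≤ F(r) F(|h|) (κ² + κ/c) h²`, where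
`F'(r) = F(r)·κr/𝓘_c(r)`. -/
theorem taylor_estimate_exp_smoothed_abs (c κ : ℝ) (hc : 0 < c) (hκ : 0 < κ)
    (F : ℝ → ℝ) (hF : ∀ r, F r = Real.exp (κ * Ic c r)) :
    ∀ r h : ℝ,
      |F (r + h) - F r - F r * (κ * r / Ic c r) * h| ≤
        F r * F |h| * (κ ^ 2 + κ / c) * h ^ 2 := by
  have hFfun : F = fun r => Real.exp (κ * Ic c r) := funext hF
  have hIpos : ∀ x : ℝ, 0 < Ic c x := fun x => Real.sqrt_pos.2 (by positivity)
  have hIsq : ∀ x : ℝ, Ic c x ^ 2 = x ^ 2 + c ^ 2 := fun x =>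
    Real.sq_sqrt (by positivity)
  have hIc : ∀ x : ℝ, c ≤ Ic c x := fun x => by nlinarith [hIsq x, hIpos x]
  have habs : ∀ x : ℝ, |x| ≤ Ic c x := fun x => by
    nlinarith [hIsq x, hIpos x, abs_nonneg x, sq_abs x]
  have hFpos : ∀ x : ℝ, 0 < F x := fun x => by rw [hF]; exact Real.exp_pos _
  -- Lipschitz bound for Ic
  have hlip : ∀ x y : ℝ, Ic c x ≤ Ic c y + |x - y| := by
    intro x y
    have h1 : Ic c x ≤ Real.sqrt ((Ic c y + |x - y|) ^ 2) := by
      apply Real.sqrt_le_sqrt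
      nlinarith [hIsq y, habs y, abs_nonneg (x - y), sq_abs (x - y),
        le_abs_self (y * (x - y)), abs_mul y (x - y)]
    rwa [Real.sqrt_sq (add_nonneg (hIpos y).le (abs_nonneg _))] at h1
  -- derivative of Ic
  have hderivI : ∀ x : ℝ, HasDerivAt (Ic c) (x / Ic c x) x := fun x => by
    have h1 : HasDerivAt (fun y : ℝ => y ^ 2 + c ^ 2) (2 * x) x := by
      simpa using ((hasDerivAt_pow 2 x).add_const (c ^ 2))
    have h2 := (Real.hasDerivAt_sqrt (show x ^ 2 + c ^ 2 ≠ 0 by positivity)).comp x h1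
    refine h2.congr_deriv ?_
    rw [show Real.sqrt (x ^ 2 + c ^ 2) = Ic c x from rfl]
    field_simp
  -- derivative of F
  have hderivF : ∀ x : ℝ, HasDerivAt F (F x * (κ * x / Ic c x)) x := fun x => by
    rw [hFfun]
    have h1 : HasDerivAt (fun y => κ * Ic c y) (κ * (x / Ic c x)) x :=
      (hderivI x).const_mul κ
    have h2 := (Real.hasDerivAt_exp (κ * Ic c x)).comp x h1
    refine h2.congr_deriv ?_
    simp [hF]; ring
  -- derivative of F'
  have hderivF' : ∀ x : ℝ, HasDerivAt (fun y => F y * (κ * y / Ic c y))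
      (F x * (κ ^ 2 * x ^ 2 / Ic c x ^ 2 + κ * c ^ 2 / Ic c x ^ 3)) x := fun x => by
    have hq : HasDerivAt (fun y => κ * y / Ic c y)
        ((κ * 1 * Ic c x - κ * id x * (x / Ic c x)) / Ic c x ^ 2) x := by
      exact ((hasDerivAt_id x).const_mul κ).div (hderivI x) (hIpos x).ne'
    have h2 := (hderivF x).mul hq
    refine h2.congr_deriv ?_
    have hI := (hIpos x).ne'
    have hsq := hIsq x
    have key : κ * 1 * Ic c x - κ * id x * (x / Ic c x) = κ * c ^ 2 / Ic c x := by
      simp only [id]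
      field_simp
      linear_combination hsq
    rw [key]
    field_simp
  intro r h
  set s : Set ℝ := Set.uIcc r (r + h) with hs
  set C : ℝ := F r * F |h| * (κ ^ 2 + κ / c) with hC
  have hCpos : 0 < C := by
    have := hFpos r; have := hFpos |h|
    have : 0 < κ ^ 2 + κ / c := by positivity
    positivity
  have hmem : ∀ x ∈ s, |x - r| ≤ |h| := by
    intro x hx
    rcases Set.mem_uIcc.mp hx with ⟨h1, h2⟩ | ⟨h1, h2⟩ <;>
      (rw [abs_le]; constructor <;>
        [nlinarith [neg_abs_le h, le_abs_self h];
         nlinarith [neg_abs_le h, le_abs_self h]])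
  -- F bound on the interval
  have hFbound : ∀ x ∈ s, F x ≤ F r * F |h| := by
    intro x hx
    rw [hF, hF, hF, ← Real.exp_add]
    apply Real.exp_le_exp.2
    have h1 : Ic c x ≤ Ic c r + |x - r| := hlip x r
    have h2 : |x - r| ≤ |h| := hmem x hx
    have h3 : |h| ≤ Ic c |h| := (le_abs_self |h|).trans (habs |h|)
    nlinarith [hIpos r, hIpos x, hIpos (|h|)]
  -- bound on the second derivative
  have hF''bound : ∀ x ∈ s,
      ‖F x * (κ ^ 2 * x ^ 2 / Ic c x ^ 2 + κ * c ^ 2 / Ic c x ^ 3)‖ ≤ C := by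
    intro x hx
    have hIx := hIpos x
    have hx2 : x ^ 2 ≤ Ic c x ^ 2 := by nlinarith [hIsq x]
    have hc3 : c ^ 2 / Ic c x ^ 3 ≤ 1 / c := by
      rw [div_le_div_iff₀ (by positivity) hc]
      nlinarith [pow_le_pow_left₀ hc.le (hIc x) 3, hIpos x]
    have hq1 : κ ^ 2 * x ^ 2 / Ic c x ^ 2 ≤ κ ^ 2 := by
      rw [div_le_iff₀ (by positivity)]
      nlinarith [sq_nonneg κ]
    have hq2 : κ * c ^ 2 / Ic c x ^ 3 ≤ κ / c := by
      calc κ * c ^ 2 / Ic c x ^ 3 = κ * (c ^ 2 / Ic c x ^ 3) := by ring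
        _ ≤ κ * (1 / c) := mul_le_mul_of_nonneg_left hc3 hκ.le
        _ = κ / c := by ring
    have hFx := hFpos x
    rw [Real.norm_eq_abs, abs_of_nonneg (by positivity)]
    calc F x * (κ ^ 2 * x ^ 2 / Ic c x ^ 2 + κ * c ^ 2 / Ic c x ^ 3)
        ≤ F x * (κ ^ 2 + κ / c) :=
          mul_le_mul_of_nonneg_left (by linarith) hFx.le
      _ ≤ F r * F |h| * (κ ^ 2 + κ / c) :=
          mul_le_mul_of_nonneg_right (hFbound x hx) (by positivity)
  -- first mean value estimate : |F'(x) - F'(r)| ≤ C * |h|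
  have key1 : ∀ x ∈ s, ‖F x * (κ * x / Ic c x) - F r * (κ * r / Ic c r)‖ ≤ C * |h| := by
    intro x hx
    have hrs : r ∈ s := Set.left_mem_uIcc
    have := Convex.norm_image_sub_le_of_norm_hasDerivWithin_le
      (f := fun y => F y * (κ * y / Ic c y))
      (f' := fun y => F y * (κ ^ 2 * y ^ 2 / Ic c y ^ 2 + κ * c ^ 2 / Ic c y ^ 3))
      (fun y hy => (hderivF' y).hasDerivWithinAt) hF''bound (convex_uIcc _ _) hrs hx
    calc ‖F x * (κ * x / Ic c x) - F r * (κ * r / Ic c r)‖ ≤ C * ‖x - r‖ := this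
      _ ≤ C * |h| := by
          rw [Real.norm_eq_abs]
          exact mul_le_mul_of_nonneg_left (hmem x hx) hCpos.le
  -- second mean value estimate
  have key2 := Convex.norm_image_sub_le_of_norm_hasDerivWithin_le
    (f := fun y => F y - F r * (κ * r / Ic c r) * y)
    (f' := fun y => F y * (κ * y / Ic c y) - F r * (κ * r / Ic c r))
    (fun y hy => (((hderivF y).sub
      ((hasDerivAt_id y).const_mul (F r * (κ * r / Ic c r)))).congr_deriv
        (by ring)).hasDerivWithinAt)
    key1 (convex_uIcc _ _) Set.left_mem_uIcc Set.right_mem_uIcc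
  have heq : (F (r + h) - F r * (κ * r / Ic c r) * (r + h)) -
      (F r - F r * (κ * r / Ic c r) * r) =
      F (r + h) - F r - F r * (κ * r / Ic c r) * h := by ring
  rw [heq] at key2
  calc |F (r + h) - F r - F r * (κ * r / Ic c r) * h|
      ≤ C * |h| * ‖r + h - r‖ := key2
    _ = C * h ^ 2 := by
        rw [Real.norm_eq_abs, show r + h - r = h by ring]
        calc C * |h| * |h| = C * |h| ^ 2 := by ring
          _ = C * h ^ 2 := by rw [sq_abs]
    _ = F r * F |h| * (κ ^ 2 + κ / c) * h ^ 2 := by rw [hC]
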